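/- Let N be a finite nonempty player set and for each nonempty S ⊆ N let μ_S ∈ ℝ and σ_S > 0. Then the following are equivalent: (1) there exist d, r : N → ℝ (with no sign restriction on r) such that d(N) = μ_N, r(N) = 1, and for every nonempty S ⊆ N the pushforward of the Gaussian measure N(μ_N, σ_N²) under the map z ↦ d(S) + r(S)·(z − μ_N) second-order stochastically dominates N(μ_S, σ_S²); (2) there exist d, r : N → ℝ satisfying d(S) ≥ μ_S for all nonempty S ⊆ N, d(N) = μ_N, |r(S)| ≤ σ_S/σ_N for all nonempty S ⊆ N, and r(N) = 1. -/

import Mathlib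

open MeasureTheory ProbabilityTheory
open scoped NNReal ENNReal Real Topology
open Filter

/-- `P` second-order stochastically dominates `Q`. -/
def SSD (P Q : Measure ℝ) : Prop :=
  ∀ u : ℝ, (∫ z in Set.Iic u, (cdf P z - cdf Q z)) ≤ 0


lemma gaussianReal_map_affine (m a b : ℝ) (v : ℝ≥0) :
    (gaussianReal m v).map (fun z => a + b * (z - m)) =
      gaussianReal a (⟨b ^ 2, sq_nonneg _⟩ * v) := by
  have h : (fun z : ℝ => a + b * (z - m)) = (fun x => x + (a - b * m)) ∘ (fun z => b * z) := by
    ext z; simp; ring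
  rw [h, ← Measure.map_map (measurable_add_const (a - b * m)) (measurable_const_mul b)]
  show ((gaussianReal m v).map (b * ·)).map (· + (a - b * m)) = _
  rw [gaussianReal_map_const_mul, gaussianReal_map_add_const]
  congr 1
  ring

lemma gaussianReal_eq_map_std (m : ℝ) (v : ℝ≥0) :
    gaussianReal m v = (gaussianReal 0 1).map (fun x => m + Real.sqrt v * (x - 0)) := by
  rw [gaussianReal_map_affine]
  congr 1
  ext
  push_cast
  show (v:ℝ) = Real.sqrt v ^ 2 * 1
  rw [Real.sq_sqrt v.coe_nonneg, mul_one]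

lemma cdf_gaussianReal (m : ℝ) {v : ℝ≥0} (hv : v ≠ 0) (z : ℝ) :
    cdf (gaussianReal m v) z = cdf (gaussianReal 0 1) ((z - m) / Real.sqrt v) := by
  have hs : (0:ℝ) < Real.sqrt v := Real.sqrt_pos.mpr (by positivity)
  rw [cdf_eq_real, cdf_eq_real, measureReal_def, measureReal_def, gaussianReal_eq_map_std m v,
    Measure.map_apply (by fun_prop) measurableSet_Iic]
  have hset : (fun x : ℝ => m + Real.sqrt v * (x - 0)) ⁻¹' Set.Iic z
      = Set.Iic ((z - m) / Real.sqrt v) := by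
    ext x
    simp only [Set.mem_preimage, Set.mem_Iic, sub_zero]
    rw [le_div_iff₀ hs, mul_comm]
    constructor <;> intro h <;> linarith
  rw [hset]

section
variable {m x a b : ℝ} {v : ℝ≥0}

lemma gauss_measure_Ioc_pos {v : ℝ≥0} (hv : v ≠ 0) (m : ℝ) (hab : a < b) :
    gaussianReal m v (Set.Ioc a b) ≠ 0 := by
  intro h
  have h0 : volume (Set.Ioc a b) = 0 := gaussianReal_absolutelyContinuous' m hv h
  rw [Real.volume_Ioc] at h0
  simp [ENNReal.ofReal_eq_zero, sub_nonpos] at h0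
  linarith

lemma cdf_std_strictMono : StrictMono (cdf (gaussianReal 0 1)) := by
  intro a b hab
  have h1 : gaussianReal 0 1 (Set.Iic a) + gaussianReal 0 1 (Set.Ioc a b)
      = gaussianReal 0 1 (Set.Iic b) := by
    rw [← measure_union (Set.Iic_disjoint_Ioc le_rfl) measurableSet_Ioc,
      Set.Iic_union_Ioc_eq_Iic hab.le]
  rw [cdf_eq_real, cdf_eq_real, measureReal_def, measureReal_def, ← h1]
  have hfin : gaussianReal 0 1 (Set.Iic a) + gaussianReal 0 1 (Set.Ioc a b) ≠ ⊤ :=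
    (lt_of_le_of_lt (le_of_eq h1) (measure_lt_top _ _)).ne
  rw [ENNReal.toReal_add (by finiteness) (by finiteness)]
  have := ENNReal.toReal_pos (gauss_measure_Ioc_pos one_ne_zero 0 hab) (by finiteness)
  linarith

lemma gauss_singleton (hx : x ≠ 0) : gaussianReal m v {m + x} = 0 := by
  by_cases hv : v = 0
  · subst hv
    rw [gaussianReal_zero_var, Measure.dirac_apply' _ (measurableSet_singleton _)]
    simp only [Set.indicator_apply, Set.mem_singleton_iff]
    rw [if_neg (by intro h; exact hx (by linarith))]
  · exact gaussianReal_absolutelyContinuous m hv (measure_singleton _)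

lemma gaussianReal_map_reflect : (gaussianReal m v).map (fun z => 2 * m - z) = gaussianReal m v := by
  have h : (fun z : ℝ => 2 * m - z) = fun z => m + (-1) * (z - m) := by ext z; ring
  rw [h, gaussianReal_map_affine]
  congr 1
  ext
  push_cast
  norm_num
  exact one_mul v

lemma cdf_reflect (hx : x ≠ 0) :
    cdf (gaussianReal m v) (m - x) = 1 - cdf (gaussianReal m v) (m + x) := by
  have hIoi : gaussianReal m v (Set.Ioi (m + x)) = 1 - gaussianReal m v (Set.Iic (m + x)) := by
    rw [← Set.compl_Iic, measure_compl measurableSet_Iic (by finiteness), measure_univ]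
  have hIci : gaussianReal m v (Set.Ici (m + x)) = gaussianReal m v (Set.Ioi (m + x)) := by
    apply le_antisymm
    · rw [← Set.Ioi_insert]
      rw [Set.insert_eq]
      refine le_trans (measure_union_le _ _) ?_
      rw [gauss_singleton hx, zero_add]
    · exact measure_mono Set.Ioi_subset_Ici_self
  have hmap : gaussianReal m v (Set.Iic (m - x)) = gaussianReal m v (Set.Ici (m + x)) := by
    conv_lhs => rw [← gaussianReal_map_reflect (m := m) (v := v)]
    rw [Measure.map_apply (by fun_prop) measurableSet_Iic]
    congr 1
    ext z
    simp only [Set.mem_preimage, Set.mem_Iic, Set.mem_Ici]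
    constructor <;> intro h <;> linarith
  rw [cdf_eq_real, cdf_eq_real, measureReal_def, measureReal_def, hmap, hIci, hIoi,
    ENNReal.toReal_sub_of_le prob_le_one (by finiteness)]
  simp

lemma cdf_shift_le (h : b ≤ a) (z : ℝ) :
    cdf (gaussianReal a v) z ≤ cdf (gaussianReal b v) z := by
  have hmap : (gaussianReal b v).map (· + (a - b)) = gaussianReal a v := by
    rw [gaussianReal_map_add_const]
    congr 1
    ring
  rw [cdf_eq_real, cdf_eq_real, measureReal_def, measureReal_def, ← hmap,
    Measure.map_apply (measurable_add_const _) measurableSet_Iic]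
  apply ENNReal.toReal_mono (by finiteness)
  apply measure_mono
  intro w hw
  simp only [Set.mem_preimage, Set.mem_Iic] at *
  linarith

end

lemma ofReal_max_zero (a : ℝ) : ENNReal.ofReal (max a 0) = ENNReal.ofReal a := by
  rcases le_total a 0 with h | h
  · rw [max_eq_right h, ENNReal.ofReal_eq_zero.mpr h, ENNReal.ofReal_zero]
  · rw [max_eq_left h]

lemma lintegral_cdf_Iic (P : Measure ℝ) [IsProbabilityMeasure P] (u : ℝ) :
    ∫⁻ z in Set.Iic u, ENNReal.ofReal (cdf P z) = ∫⁻ x, ENNReal.ofReal (u - x) ∂P := by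
  have h1 : ∀ z : ℝ, ENNReal.ofReal (cdf P z)
      = ∫⁻ x, (if x ≤ z then (1:ℝ≥0∞) else 0) ∂P := by
    intro z
    rw [ofReal_cdf]
    have : ∀ x : ℝ, (if x ≤ z then (1:ℝ≥0∞) else 0) = (Set.Iic z).indicator 1 x := by
      intro x
      simp only [Set.indicator_apply, Set.mem_Iic, Pi.one_apply]
    simp_rw [this]
    rw [lintegral_indicator_one measurableSet_Iic]
  simp_rw [h1]
  rw [lintegral_lintegral_swap]
  · congr 1
    ext x
    have : ∀ z : ℝ, (if x ≤ z then (1:ℝ≥0∞) else 0) = (Set.Ici x).indicator 1 z := by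
      intro z
      simp only [Set.indicator_apply, Set.mem_Ici, Pi.one_apply]
    simp_rw [this]
    rw [lintegral_indicator_one measurableSet_Ici, Measure.restrict_apply measurableSet_Ici,
      Set.Ici_inter_Iic, Real.volume_Icc]
  · apply Measurable.aemeasurable
    have hm : MeasurableSet {p : ℝ × ℝ | p.2 ≤ p.1} := measurableSet_le measurable_snd measurable_fst
    exact Measurable.ite hm measurable_const measurable_const

lemma integrable_max_sub (P : Measure ℝ) [IsProbabilityMeasure P] (hP : Integrable id P)
    (u : ℝ) : Integrable (fun x => max (u - x) 0) P := by
  have h : Integrable (fun x : ℝ => |u| + |x|) P := (integrable_const |u|).add hP.abs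
  refine h.mono' ?_ ?_
  · exact ((continuous_const.sub continuous_id).max continuous_const).aestronglyMeasurable
  · refine ae_of_all _ fun x => ?_
    rw [Real.norm_eq_abs, abs_of_nonneg (le_max_right _ _)]
    rcases le_total (u - x) 0 with h' | h'
    · rw [max_eq_right h']; positivity
    · rw [max_eq_left h']
      calc u - x ≤ |u - x| := le_abs_self _
        _ ≤ |u| + |x| := abs_sub _ _

lemma integrableOn_cdf_Iic (P : Measure ℝ) [IsProbabilityMeasure P] (hP : Integrable id P)
    (u : ℝ) : IntegrableOn (cdf P) (Set.Iic u) := by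
  constructor
  · exact ((monotone_cdf P).measurable).aestronglyMeasurable
  · rw [hasFiniteIntegral_iff_ofReal (ae_of_all _ fun z => cdf_nonneg P z)]
    rw [lintegral_cdf_Iic P u]
    calc ∫⁻ x, ENNReal.ofReal (u - x) ∂P = ∫⁻ x, ENNReal.ofReal (max (u - x) 0) ∂P := by
          simp_rw [ofReal_max_zero]
      _ < ⊤ := (integrable_max_sub P hP u).lintegral_lt_top

lemma setIntegral_cdf_Iic (P : Measure ℝ) [IsProbabilityMeasure P] (hP : Integrable id P)
    (u : ℝ) : ∫ z in Set.Iic u, cdf P z = ∫ x, max (u - x) 0 ∂P := by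
  rw [integral_eq_lintegral_of_nonneg_ae (ae_of_all _ fun z => cdf_nonneg P z)
      ((monotone_cdf P).measurable).aestronglyMeasurable,
    integral_eq_lintegral_of_nonneg_ae (f := fun x => max (u - x) 0)
      (ae_of_all _ fun x => le_max_right _ _)
      (((continuous_const.sub continuous_id).max continuous_const).aestronglyMeasurable)]
  congr 1
  rw [lintegral_cdf_Iic P u]
  simp_rw [ofReal_max_zero]

lemma std_pdf_eq (x : ℝ) :
    gaussianPDFReal 0 1 x = (Real.sqrt (2 * π))⁻¹ * Real.exp (-(2⁻¹) * x ^ 2) := by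
  simp only [gaussianPDFReal, NNReal.coe_one, mul_one, sub_zero]
  congr 1
  rw [Real.exp_eq_exp]
  ring

lemma integrable_id_std : Integrable (id : ℝ → ℝ) (gaussianReal 0 1) := by
  rw [gaussianReal_of_var_ne_zero 0 one_ne_zero,
    integrable_withDensity_iff (measurable_gaussianPDF 0 1)
      (ae_of_all _ fun x => ENNReal.ofReal_lt_top)]
  have : (fun x : ℝ => id x * (gaussianPDF 0 1 x).toReal)
      = fun x => (Real.sqrt (2 * π))⁻¹ * (x * Real.exp (-(2⁻¹) * x ^ 2)) := by
    ext x
    rw [gaussianPDF, ENNReal.toReal_ofReal (gaussianPDFReal_nonneg _ _ _), std_pdf_eq]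
    simp [id]; ring
  rw [this]
  exact ((integrable_mul_exp_neg_mul_sq (by norm_num : (0:ℝ) < 2⁻¹)).const_mul _)

lemma integral_id_std : ∫ x, x ∂(gaussianReal 0 1) = 0 := by
  rw [gaussianReal_of_var_ne_zero 0 one_ne_zero]
  have hrw : gaussianPDF 0 1 = fun x => ((Real.toNNReal (gaussianPDFReal 0 1 x) : ℝ≥0) : ℝ≥0∞) :=
    rfl
  rw [hrw, integral_withDensity_eq_integral_smul
    ((measurable_gaussianPDFReal 0 1).real_toNNReal)]
  have h : (fun x : ℝ => Real.toNNReal (gaussianPDFReal 0 1 x) • x)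
      = fun x => gaussianPDFReal 0 1 x * x := by
    ext x
    rw [NNReal.smul_def, smul_eq_mul, Real.coe_toNNReal _ (gaussianPDFReal_nonneg _ _ _)]
  rw [h]
  have hodd : ∀ x : ℝ, gaussianPDFReal 0 1 (-x) * (-x) = -(gaussianPDFReal 0 1 x * x) := by
    intro x
    rw [std_pdf_eq, std_pdf_eq]
    ring_nf
  have := MeasureTheory.integral_neg_eq_self (fun x => gaussianPDFReal 0 1 x * x) (volume : Measure ℝ)
  simp_rw [hodd, integral_neg] at this
  linarith

lemma integrable_aff_std (m c : ℝ) :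
    Integrable (fun x : ℝ => m + c * (x - 0)) (gaussianReal 0 1) := by
  have h := (integrable_const m).add (integrable_id_std.const_mul c)
  apply h.congr
  refine ae_of_all _ fun x => ?_
  simp [id]

lemma integrable_id_gauss (m : ℝ) (v : ℝ≥0) : Integrable (id : ℝ → ℝ) (gaussianReal m v) := by
  rw [gaussianReal_eq_map_std m v,
    integrable_map_measure aestronglyMeasurable_id (by fun_prop)]
  exact integrable_aff_std m _

lemma integral_id_gauss (m : ℝ) (v : ℝ≥0) : ∫ x, x ∂(gaussianReal m v) = m := by
  have : ∫ x, x ∂(gaussianReal m v) = ∫ x, id x ∂(gaussianReal m v) := rfl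
  rw [this, gaussianReal_eq_map_std m v, integral_map (by fun_prop) aestronglyMeasurable_id]
  simp only [id, sub_zero]
  have hid : Integrable (fun x : ℝ => x) (gaussianReal 0 1) := integrable_id_std
  rw [integral_add (integrable_const m) (hid.const_mul _),
    integral_const, integral_const_mul]
  have h0 : ∫ x, x ∂(gaussianReal 0 1) = 0 := integral_id_std
  have h1 : ∫ x, id x ∂(gaussianReal 0 1) = 0 := h0
  simp [h1]

lemma cdf_dirac_lt {m z : ℝ} (h : z < m) : cdf (gaussianReal m 0) z = 0 := by
  rw [cdf_eq_real, measureReal_def, gaussianReal_zero_var, Measure.dirac_apply' _ measurableSet_Iic]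
  simp [Set.indicator_apply, Set.mem_Iic, not_le.mpr h]

lemma cdf_dirac_ge {m z : ℝ} (h : m ≤ z) : cdf (gaussianReal m 0) z = 1 := by
  rw [cdf_eq_real, measureReal_def, gaussianReal_zero_var, Measure.dirac_apply' _ measurableSet_Iic]
  simp [Set.indicator_apply, Set.mem_Iic, h]

-- pointwise comparison left of the mean
lemma cdf_spread_le_left {m z : ℝ} {v1 v2 : ℝ≥0} (hv2 : v2 ≠ 0) (hv : v1 ≤ v2) (h : z < m) :
    cdf (gaussianReal m v1) z ≤ cdf (gaussianReal m v2) z := by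
  by_cases hv1 : v1 = 0
  · subst hv1; rw [cdf_dirac_lt h]; exact cdf_nonneg _ _
  · rw [cdf_gaussianReal m hv1, cdf_gaussianReal m hv2]
    apply (cdf_std_strictMono.monotone)
    have h1 : (0:ℝ) < Real.sqrt v1 := Real.sqrt_pos.mpr (by
      have := (zero_le (a := v1)).lt_of_ne (Ne.symm hv1); exact_mod_cast this)
    have h2 : (0:ℝ) < Real.sqrt v2 := Real.sqrt_pos.mpr (by
      have := (zero_le (a := v2)).lt_of_ne (Ne.symm hv2); exact_mod_cast this)
    have h12 : Real.sqrt v1 ≤ Real.sqrt v2 := Real.sqrt_le_sqrt (by exact_mod_cast hv)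
    rw [div_le_div_iff₀ h1 h2]
    nlinarith

lemma ae_ne_vol (m : ℝ) : ∀ᵐ z : ℝ ∂(volume : Measure ℝ), z ≠ m := by
  rw [ae_iff]
  have : {z : ℝ | ¬ z ≠ m} = {m} := by ext z; simp
  rw [this, Real.volume_singleton]

lemma spread_nonpos {m : ℝ} {v1 v2 : ℝ≥0} (hv2 : v2 ≠ 0) (hv : v1 ≤ v2) (u : ℝ) :
    ∫ z in Set.Iic u, (cdf (gaussianReal m v1) z - cdf (gaussianReal m v2) z) ≤ 0 := by
  set f : ℝ → ℝ := fun z => cdf (gaussianReal m v1) z - cdf (gaussianReal m v2) z with hf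
  have hint : ∀ t : ℝ, IntegrableOn f (Set.Iic t) := fun t =>
    (integrableOn_cdf_Iic _ (integrable_id_gauss m v1) t).sub
      (integrableOn_cdf_Iic _ (integrable_id_gauss m v2) t)
  have hneg : ∀ z < m, f z ≤ 0 := fun z hz =>
    sub_nonpos.mpr (cdf_spread_le_left hv2 hv hz)
  have hIic_nonpos : ∀ t ≤ m, ∫ z in Set.Iic t, f z ≤ 0 := by
    intro t ht
    apply integral_nonpos_of_ae
    rw [EventuallyLE, ae_restrict_iff' measurableSet_Iic]
    filter_upwards [ae_ne_vol m] with z hz hz'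
    exact hneg z (lt_of_le_of_ne (hz'.trans ht) hz)
  rcases le_total u m with hu | hu
  · exact hIic_nonpos u hu
  · -- split at a = 2m - u ≤ m ≤ u
    set a : ℝ := 2 * m - u with ha
    have hau : a ≤ u := by simp only [ha]; linarith
    have hsplit : ∫ z in Set.Iic u, f z = (∫ z in Set.Iic a, f z) + ∫ z in Set.Ioc a u, f z := by
      rw [← setIntegral_union (Set.Iic_disjoint_Ioc le_rfl) measurableSet_Ioc
        ((hint a)) ((hint u).mono_set Set.Ioc_subset_Iic_self),
        Set.Iic_union_Ioc_eq_Iic hau]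
    have hIoc : ∫ z in Set.Ioc a u, f z = ∫ z in a..u, f z := by
      rw [intervalIntegral.integral_of_le hau]
    have hrefl : ∫ z in a..u, f (2 * m - z) = ∫ z in a..u, f z := by
      rw [intervalIntegral.integral_comp_sub_left f (2 * m)]
      congr 1 <;> simp [ha] <;> ring
    have hodd : ∀ᵐ z : ℝ ∂(volume : Measure ℝ), z ∈ Set.uIoc a u → f (2 * m - z) = -f z := by
      filter_upwards [ae_ne_vol m] with z hz _
      have hx : z - m ≠ 0 := sub_ne_zero.mpr hz
      have e1 : 2 * m - z = m - (z - m) := by ring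
      have e2 : z = m + (z - m) := by ring
      simp only [hf]
      rw [e1, cdf_reflect hx, cdf_reflect (v := v2) hx, show m + (z - m) = z by ring]
      ring
    have hzero : ∫ z in a..u, f z = 0 := by
      have h1 : ∫ z in a..u, f (2 * m - z) = ∫ z in a..u, (-f z) := by
        apply intervalIntegral.integral_congr_ae
        filter_upwards [hodd] with z hz hz'
        exact hz hz'
      rw [h1, intervalIntegral.integral_neg] at hrefl
      linarith
    rw [hsplit, hIoc, hzero, add_zero]
    apply hIic_nonpos
    simp only [ha]; linarith


lemma integrable_max_sub' (P : Measure ℝ) [IsProbabilityMeasure P] (hP : Integrable id P)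
    (u : ℝ) : Integrable (fun x => max (x - u) 0) P := by
  have h : Integrable (fun x : ℝ => |u| + |x|) P := (integrable_const |u|).add hP.abs
  refine h.mono' ?_ ?_
  · exact ((continuous_id.sub continuous_const).max continuous_const).aestronglyMeasurable
  · refine ae_of_all _ fun x => ?_
    rw [Real.norm_eq_abs, abs_of_nonneg (le_max_right _ _)]
    rcases le_total (x - u) 0 with h' | h'
    · rw [max_eq_right h']; positivity
    · rw [max_eq_left h']
      calc x - u ≤ |x - u| := le_abs_self _
        _ ≤ |x| + |u| := abs_sub _ _
        _ = |u| + |x| := by ring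

theorem ssd_gauss_iff (m1 m2 : ℝ) (v1 v2 : ℝ≥0) (hv2 : v2 ≠ 0) :
    SSD (gaussianReal m1 v1) (gaussianReal m2 v2) ↔ m2 ≤ m1 ∧ v1 ≤ v2 := by
  set P := gaussianReal m1 v1
  set Q := gaussianReal m2 v2
  have hPi : Integrable id P := integrable_id_gauss m1 v1
  have hQi : Integrable id Q := integrable_id_gauss m2 v2
  have hkey : ∀ u : ℝ, (∫ z in Set.Iic u, (cdf P z - cdf Q z))
      = (∫ x, max (u - x) 0 ∂P) - ∫ x, max (u - x) 0 ∂Q := by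
    intro u
    rw [integral_sub (integrableOn_cdf_Iic P hPi u) (integrableOn_cdf_Iic Q hQi u),
      setIntegral_cdf_Iic P hPi u, setIntegral_cdf_Iic Q hQi u]
  constructor
  · intro hssd
    constructor
    · -- mean comparison
      have hineq : ∀ u : ℝ, m2 - m1 ≤ ∫ x, max (x - u) 0 ∂Q := by
        intro u
        have h0 := hssd u
        rw [hkey u] at h0
        have hPi' : Integrable (fun x : ℝ => x) P := hPi
        have hA : u - m1 ≤ ∫ x, max (u - x) 0 ∂P := by
          have h : ∫ x, (u - x) ∂P = u - m1 := by
            rw [integral_sub (integrable_const u) hPi', integral_const]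
            simp [P, integral_id_gauss]
          rw [← h]
          exact integral_mono ((integrable_const u).sub hPi') (integrable_max_sub P hPi u)
            (fun x => le_max_left _ _)
        have hQi' : Integrable (fun x : ℝ => x) Q := hQi
        have hconstQ : ∫ x, (u - x) ∂Q = u - m2 := by
          rw [integral_sub (integrable_const u) hQi', integral_const]
          simp [Q, integral_id_gauss]
        have hsub := integral_sub (integrable_max_sub Q hQi u) (integrable_max_sub' Q hQi u)
        have hfun : (fun x : ℝ => max (u - x) 0 - max (x - u) 0) = fun x : ℝ => u - x := by
          ext x
          rcases le_total x u with h | h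
          · rw [max_eq_left (by linarith), max_eq_right (by linarith)]; ring
          · rw [max_eq_right (by linarith), max_eq_left (by linarith)]; ring
        rw [hfun, hconstQ] at hsub
        linarith
      have htend : Tendsto (fun u : ℝ => ∫ x, max (x - u) 0 ∂Q) atTop (𝓝 0) := by
        have htend' := tendsto_integral_filter_of_dominated_convergence (μ := Q) (l := atTop)
          (F := fun u : ℝ => fun x : ℝ => max (x - u) 0) (f := fun _ : ℝ => (0:ℝ))
          (fun x => |x|)
          (Eventually.of_forall fun u =>
            ((continuous_id.sub continuous_const).max continuous_const).aestronglyMeasurable)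
          ?_ hQi.abs ?_
        · simpa using htend'
        · filter_upwards [eventually_ge_atTop (0:ℝ)] with u hu
          refine ae_of_all _ fun x => ?_
          rw [Real.norm_eq_abs, abs_of_nonneg (le_max_right _ _)]
          rcases le_total (x - u) 0 with h' | h'
          · rw [max_eq_right h']; positivity
          · rw [max_eq_left h']
            have hx0 : 0 ≤ x := by linarith
            rw [abs_of_nonneg hx0]; linarith
        · refine ae_of_all _ fun x => ?_
          apply Tendsto.congr' (f₁ := fun _ => (0:ℝ))
          · filter_upwards [eventually_ge_atTop x] with u hu
            rw [max_eq_right (by linarith)]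
          · exact tendsto_const_nhds
      linarith [ge_of_tendsto' htend hineq]
    · -- variance comparison
      by_contra hlt
      rw [not_le] at hlt
      have hv1 : v1 ≠ 0 := fun h => by simp [h] at hlt
      set s1 := Real.sqrt v1
      set s2 := Real.sqrt v2
      have hs1 : 0 < s1 := Real.sqrt_pos.mpr (by
        have := (zero_le (a := v1)).lt_of_ne (Ne.symm hv1); exact_mod_cast this)
      have hs2 : 0 < s2 := Real.sqrt_pos.mpr (by
        have := (zero_le (a := v2)).lt_of_ne (Ne.symm hv2); exact_mod_cast this)
      have hs21 : s2 < s1 := by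
        apply Real.sqrt_lt_sqrt (by positivity)
        exact_mod_cast hlt
      set zstar := (m2 * s1 - m1 * s2) / (s1 - s2)
      set u := zstar - 1
      have hpt : ∀ z ≤ u, cdf Q z < cdf P z := by
        intro z hz
        have hzlt : z < zstar := by simp only [u] at hz; linarith
        rw [show cdf Q z = cdf (gaussianReal m2 v2) z from rfl,
          show cdf P z = cdf (gaussianReal m1 v1) z from rfl,
          cdf_gaussianReal m1 hv1, cdf_gaussianReal m2 hv2]
        apply cdf_std_strictMono
        rw [div_lt_div_iff₀ hs2 hs1]
        have h1 : z * (s1 - s2) < m2 * s1 - m1 * s2 := by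
          rw [← lt_div_iff₀ (by linarith : (0:ℝ) < s1 - s2)] at *
          exact hzlt
        nlinarith
      have hposint : 0 < ∫ z in Set.Iic u, (cdf P z - cdf Q z) := by
        rw [setIntegral_pos_iff_support_of_nonneg_ae]
        · have hsub : Set.Iic u ⊆ Function.support (fun z => cdf P z - cdf Q z) ∩ Set.Iic u := by
            intro z hz
            refine ⟨?_, hz⟩
            simp only [Function.mem_support]
            have := hpt z hz
            intro h0
            linarith
          refine lt_of_lt_of_le ?_ (measure_mono hsub)
          rw [Real.volume_Iic]
          exact ENNReal.zero_lt_top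
        · rw [EventuallyLE, ae_restrict_iff' measurableSet_Iic]
          refine ae_of_all _ fun z hz => ?_
          have := hpt z hz
          simp only [Pi.zero_apply]
          linarith
        · exact (integrableOn_cdf_Iic P hPi u).sub (integrableOn_cdf_Iic Q hQi u)
      linarith [hssd u]
  · rintro ⟨hm, hv⟩ u
    set R := gaussianReal m2 v1
    have hRi : Integrable id R := integrable_id_gauss m2 v1
    have heq : ∀ z : ℝ, cdf P z - cdf Q z = (cdf P z - cdf R z) + (cdf R z - cdf Q z) := by
      intro z; ring
    simp_rw [heq]
    have hPR : IntegrableOn (fun z : ℝ => cdf P z - cdf R z) (Set.Iic u) volume :=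
      (integrableOn_cdf_Iic P hPi u).sub (integrableOn_cdf_Iic R hRi u)
    have hRQ : IntegrableOn (fun z : ℝ => cdf R z - cdf Q z) (Set.Iic u) volume :=
      (integrableOn_cdf_Iic R hRi u).sub (integrableOn_cdf_Iic Q hQi u)
    rw [integral_add hPR hRQ]
    have h1 : ∫ z in Set.Iic u, (cdf P z - cdf R z) ≤ 0 := by
      apply integral_nonpos_of_ae
      refine ae_of_all _ fun z => ?_
      have := cdf_shift_le (v := v1) hm z
      simp only [Pi.zero_apply]
      linarith [cdf_shift_le (v := v1) hm z]
    have h2 : ∫ z in Set.Iic u, (cdf R z - cdf Q z) ≤ 0 := spread_nonpos hv2 hv u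
    linarith
/-- Under normally distributed coalitional values, the SSD-core with transfer payments and
unrestricted risk parts is nonempty iff there are `d, r` with `d(S) ≥ μ_S`, `d(N) = μ_N`,
`|r(S)| ≤ σ_S/σ_N`, and `r(N) = 1`. -/
theorem ssd_core_normal_general_r_iff {N : Type*} [Fintype N] [DecidableEq N] [Nonempty N]
    (μ σ : Finset N → ℝ)
    (hσ : ∀ S : Finset N, S.Nonempty → 0 < σ S) :
    (∃ d r : N → ℝ, (∑ i : N, d i = μ Finset.univ) ∧ (∑ i : N, r i = 1) ∧
        ∀ S : Finset N, S.Nonempty →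
          SSD ((gaussianReal (μ Finset.univ) ⟨σ Finset.univ ^ 2, sq_nonneg _⟩).map
              (fun z => (∑ i ∈ S, d i) + (∑ i ∈ S, r i) * (z - μ Finset.univ)))
            (gaussianReal (μ S) ⟨σ S ^ 2, sq_nonneg _⟩)) ↔
      (∃ d r : N → ℝ,
        (∀ S : Finset N, S.Nonempty → μ S ≤ ∑ i ∈ S, d i) ∧
        (∑ i : N, d i = μ Finset.univ) ∧
        (∀ S : Finset N, S.Nonempty → |∑ i ∈ S, r i| ≤ σ S / σ Finset.univ) ∧
        (∑ i : N, r i = 1)) := by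
  have hN : (Finset.univ : Finset N).Nonempty := Finset.univ_nonempty
  have hσN : 0 < σ Finset.univ := hσ _ hN
  have hequiv : ∀ (S : Finset N), S.Nonempty → ∀ dS rS : ℝ,
      (SSD ((gaussianReal (μ Finset.univ) ⟨σ Finset.univ ^ 2, sq_nonneg _⟩).map
          (fun z => dS + rS * (z - μ Finset.univ)))
        (gaussianReal (μ S) ⟨σ S ^ 2, sq_nonneg _⟩)
      ↔ (μ S ≤ dS ∧ |rS| ≤ σ S / σ Finset.univ)) := by
    intro S hS dS rS
    have hσS : 0 < σ S := hσ S hS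
    have hvS : (⟨σ S ^ 2, sq_nonneg _⟩ : ℝ≥0) ≠ 0 := by
      intro h
      have h' := congrArg (fun x : ℝ≥0 => (x : ℝ)) h
      change σ S ^ 2 = (0:ℝ) at h'
      nlinarith
    refine (iff_of_eq (congrArg (fun P => SSD P _) (gaussianReal_map_affine _ _ _ _))).trans
      ((ssd_gauss_iff _ _ _ _ hvS).trans ?_)
    constructor
    · rintro ⟨h1, h2⟩
      refine ⟨h1, ?_⟩
      replace h2 : rS ^ 2 * σ Finset.univ ^ 2 ≤ σ S ^ 2 := NNReal.coe_le_coe.mpr h2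
      rw [le_div_iff₀ hσN]
      nlinarith [abs_nonneg rS, sq_abs rS, sq_nonneg (|rS| * σ Finset.univ + σ S)]
    · rintro ⟨h1, h2⟩
      refine ⟨h1, ?_⟩
      refine NNReal.coe_le_coe.mp (?_ : rS ^ 2 * σ Finset.univ ^ 2 ≤ σ S ^ 2)
      rw [le_div_iff₀ hσN] at h2
      nlinarith [mul_self_le_mul_self (by positivity : (0:ℝ) ≤ |rS| * σ Finset.univ) h2, sq_abs rS]
  constructor
  · rintro ⟨d, r, hd, hr, h⟩
    exact ⟨d, r, fun S hS => ((hequiv S hS _ _).mp (h S hS)).1, hd,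
      fun S hS => ((hequiv S hS _ _).mp (h S hS)).2, hr⟩
  · rintro ⟨d, r, hd1, hd2, hr1, hr2⟩
    exact ⟨d, r, hd2, hr2, fun S hS => (hequiv S hS _ _).mpr ⟨hd1 S hS, hr1 S hS⟩⟩
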